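/- Let F ∈ ℝ^{m×m} be symmetric positive definite and let L_F ∈ ℝ^{m×m} be invertible with L_Fᵀ L_F = F. Let γ̃ ∈ ℝ^c have all entries nonzero and set Γ̃ = diag(γ̃). Let X ∈ ℝ^{c×c} be diagonal with positive diagonal entries, set Λ = (Γ̃² + X)/2, and let Ũ ∈ ℝ^{m×c} satisfy Ũᵀ Ũ = I_c. Then Λ is invertible and Ĉ = Λ⁻¹ Γ̃ Ũᵀ L_F satisfies that the block matrix [[F, −Ĉᵀ Λ], [−Λ Ĉ, 2Λ − X]] is positive semidefinite. -/

import Mathlib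

open Matrix

/-- Parameterization of a 1-D convolutional layer followed by a
maximum pooling layer: with `Γ̃ = diag(γ̃)`, diagonal `X = diag(x) ≻ 0`,
`Λ = (Γ̃² + X)/2`, `Ũᵀ Ũ = I` and `Ĉ = Λ⁻¹ Γ̃ Ũᵀ L_F`, the matrix `Λ` is
invertible and `[[F, −Ĉᵀ Λ], [−Λ Ĉ, 2Λ − X]]` is positive semidefinite. -/
theorem conv1d_maxpool_parameterization_satisfies_LMI
    (m c : ℕ)
    (F : Matrix (Fin m) (Fin m) ℝ) (hF : F.PosDef)
    (LF : Matrix (Fin m) (Fin m) ℝ) (hLF : IsUnit LF) (hLFF : LFᵀ * LF = F)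
    (γt : Fin c → ℝ) (hγt : ∀ i, γt i ≠ 0)
    (x : Fin c → ℝ) (hx : ∀ i, 0 < x i)
    (X : Matrix (Fin c) (Fin c) ℝ) (hX : X = Matrix.diagonal x)
    (Λ : Matrix (Fin c) (Fin c) ℝ)
    (hΛ : Λ = (2⁻¹ : ℝ) • (Matrix.diagonal γt * Matrix.diagonal γt + X))
    (Ut : Matrix (Fin m) (Fin c) ℝ) (hUt : Utᵀ * Ut = 1)
    (Ch : Matrix (Fin c) (Fin m) ℝ)
    (hCh : Ch = Λ⁻¹ * Matrix.diagonal γt * Utᵀ * LF) :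
    IsUnit Λ ∧
    (Matrix.fromBlocks F (-(Chᵀ * Λ)) (-(Λ * Ch)) ((2 : ℝ) • Λ - X)).PosSemidef := by
  set G : Matrix (Fin c) (Fin c) ℝ := Matrix.diagonal γt with hG
  have hΛdiag : Λ = Matrix.diagonal (fun i => (2⁻¹ : ℝ) * (γt i * γt i + x i)) := by
    rw [hΛ, hX, hG, Matrix.diagonal_mul_diagonal, Matrix.diagonal_add]
    ext i j
    by_cases h : i = j <;> simp [Matrix.diagonal_apply, h]
  have hdet : IsUnit Λ.det := by
    rw [hΛdiag, Matrix.det_diagonal]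
    refine isUnit_iff_ne_zero.mpr (Finset.prod_ne_zero_iff.mpr fun i _ => ?_)
    have h1 : 0 < γt i * γt i := mul_self_pos.mpr (hγt i)
    have h2 := hx i
    positivity
  have hΛunit : IsUnit Λ := (Matrix.isUnit_iff_isUnit_det Λ).mpr hdet
  refine ⟨hΛunit, ?_⟩
  have hΛinv : Λ * Λ⁻¹ = 1 := Matrix.mul_nonsing_inv Λ hdet
  have hΛsym : Λᵀ = Λ := by rw [hΛdiag, Matrix.diagonal_transpose]
  have hΛCh : Λ * Ch = G * Utᵀ * LF := by
    rw [hCh]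
    calc Λ * (Λ⁻¹ * G * Utᵀ * LF) = (Λ * Λ⁻¹) * (G * Utᵀ * LF) := by
          simp only [Matrix.mul_assoc]
      _ = G * Utᵀ * LF := by rw [hΛinv, Matrix.one_mul, Matrix.mul_assoc]
  have hChΛ : Chᵀ * Λ = LFᵀ * Ut * G := by
    have : Chᵀ * Λ = (Λ * Ch)ᵀ := by rw [Matrix.transpose_mul, hΛsym]
    rw [this, hΛCh]
    simp [Matrix.transpose_mul, hG, Matrix.mul_assoc]
  have hGG : (2 : ℝ) • Λ - X = G * G := by
    rw [hΛ]
    rw [smul_smul]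
    norm_num
  set B : Matrix (Fin m) (Fin m ⊕ Fin c) ℝ := Matrix.fromCols LF (-(Ut * G)) with hB
  have hps : (Bᴴ * B).PosSemidef := Matrix.posSemidef_conjTranspose_mul_self B
  have hBT : Bᴴ = Matrix.fromRows LFᵀ (-(Ut * G))ᵀ := by
    rw [hB, Matrix.conjTranspose_eq_transpose_of_trivial, Matrix.transpose_fromCols]
  have hGsym : Gᵀ = G := by rw [hG, Matrix.diagonal_transpose]
  have h12 : LFᵀ * -(Ut * G) = -(Chᵀ * Λ) := by
    rw [hChΛ, Matrix.mul_neg, Matrix.mul_assoc]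
  have h21 : (-(Ut * G))ᵀ * LF = -(Λ * Ch) := by
    rw [hΛCh, Matrix.transpose_neg, Matrix.transpose_mul, hGsym, Matrix.neg_mul,
      Matrix.mul_assoc]
  have h22 : (-(Ut * G))ᵀ * -(Ut * G) = (2 : ℝ) • Λ - X := by
    rw [hGG, Matrix.transpose_neg, Matrix.transpose_mul, hGsym, Matrix.neg_mul,
      Matrix.mul_neg, neg_neg, Matrix.mul_assoc, ← Matrix.mul_assoc Utᵀ, hUt,
      Matrix.one_mul]
  have hEq : Bᴴ * B =
      Matrix.fromBlocks F (-(Chᵀ * Λ)) (-(Λ * Ch)) ((2 : ℝ) • Λ - X) := by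
    rw [hBT, hB, Matrix.fromRows_mul_fromCols, hLFF, h12, h21, h22]
  rwa [hEq] at hps
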